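/- For each integer d ≥ 5 set n = 2d, let δ(d) be a positive integer with δ(d) ≤ n, and let P₁, …, P_{δ(d)} be independent uniformly random (d−1)-element subsets of [n]. Then the probability that there exist indices j ≠ j' with |P_j ∩ P_{j'}| > d−4 tends to 0 as d → ∞. -/

import Mathlib

open scoped Classical

/-- The probability of the event `p` under the uniform distribution on the finite
sample space `Ω`. -/
noncomputable def probOf {β : Type*} (Ω : Finset β) (p : β → Prop) : ℝ :=
  ((Ω.filter p).card : ℝ) / (Ω.card : ℝ)

open Finset

/-- Sets of size ≤ 2 in `range n`. -/
lemma small_sets_card (n : ℕ) (hn : 1 ≤ n) :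
    (((Finset.range n).powerset).filter (fun t => t.card ≤ 2)).card ≤ 3 * n ^ 2 := by
  classical
  have hsub : ((Finset.range n).powerset).filter (fun t => t.card ≤ 2) ⊆
      (Finset.range 3).biUnion (fun k => (Finset.range n).powersetCard k) := by
    intro t ht
    simp only [Finset.mem_filter, Finset.mem_powerset] at ht
    simp only [Finset.mem_biUnion, Finset.mem_range, Finset.mem_powersetCard]
    exact ⟨t.card, by omega, ht.1, rfl⟩
  have h2 : n.choose 2 ≤ n ^ 2 := by
    rw [Nat.choose_two_right]
    calc n * (n - 1) / 2 ≤ n * (n - 1) := Nat.div_le_self _ _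
      _ ≤ n * n := Nat.mul_le_mul_left _ (Nat.sub_le _ _)
      _ = n ^ 2 := (sq n).symm
  calc _ ≤ ((Finset.range 3).biUnion (fun k => (Finset.range n).powersetCard k)).card :=
        Finset.card_le_card hsub
    _ ≤ ∑ k ∈ Finset.range 3, ((Finset.range n).powersetCard k).card :=
        Finset.card_biUnion_le
    _ = ∑ k ∈ Finset.range 3, n.choose k := by
        simp [Finset.card_powersetCard]
    _ ≤ 3 * n ^ 2 := by
        rw [Finset.sum_range_succ, Finset.sum_range_succ, Finset.sum_range_one]
        have h1 : n.choose 1 = n := Nat.choose_one_right n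
        have h0 : n.choose 0 = 1 := Nat.choose_zero_right n
        have : n ≤ n ^ 2 := by nlinarith
        omega

/-- Number of pairs of (d-1)-subsets with large intersection. -/
lemma bad_pairs_card (d : ℕ) (hd : 5 ≤ d) :
    (((Finset.powersetCard (d - 1) (Finset.range (2 * d))) ×ˢ
        (Finset.powersetCard (d - 1) (Finset.range (2 * d)))).filter
      (fun ab => d - 4 < (ab.1 ∩ ab.2).card)).card
    ≤ 144 * d ^ 4 * ((2 * d).choose (d - 1)) := by
  classical
  set S := Finset.powersetCard (d - 1) (Finset.range (2 * d)) with hS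
  set T := ((Finset.range (2 * d)).powerset).filter (fun t => t.card ≤ 2) with hT
  have key : ((S ×ˢ S).filter (fun ab => d - 4 < (ab.1 ∩ ab.2).card)).card ≤
      (S ×ˢ (T ×ˢ T)).card := by
    apply Finset.card_le_card_of_injOn
      (fun ab => (ab.1, (ab.1 \ ab.2, ab.2 \ ab.1)))
    · rintro ⟨A, B⟩ hab
      simp only [Finset.mem_coe, Finset.mem_filter, Finset.mem_product] at hab
      obtain ⟨⟨hA, hB⟩, hcard⟩ := hab
      rw [hS, Finset.mem_powersetCard] at hA hB
      have hAB : (A ∩ B).card + (A \ B).card = A.card := Finset.card_inter_add_card_sdiff A B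
      have hBA : (B ∩ A).card + (B \ A).card = B.card := Finset.card_inter_add_card_sdiff B A
      have hcomm : (B ∩ A).card = (A ∩ B).card := by rw [Finset.inter_comm]
      simp only [Finset.mem_coe, Finset.mem_product, hT, Finset.mem_filter, Finset.mem_powerset]
      refine ⟨by rwa [hS, Finset.mem_powersetCard] , ⟨⟨?_, ?_⟩, ?_, ?_⟩⟩
      · exact (Finset.sdiff_subset).trans hA.1
      · omega
      · exact (Finset.sdiff_subset).trans hB.1
      · omega
    · rintro ⟨A₁, B₁⟩ h₁ ⟨A₂, B₂⟩ h₂ h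
      simp only [Prod.mk.injEq] at h
      obtain ⟨hA, hd1, hd2⟩ := h
      subst hA
      have e1 : B₁ = (A₁ \ (A₁ \ B₁)) ∪ (B₁ \ A₁) := by
        rw [Finset.sdiff_sdiff_self_left]; ext x; simp; tauto
      have e2 : B₂ = (A₁ \ (A₁ \ B₂)) ∪ (B₂ \ A₁) := by
        rw [Finset.sdiff_sdiff_self_left]; ext x; simp; tauto
      simp only [Prod.mk.injEq]
      exact ⟨trivial, by rw [e1, hd1, hd2, ← e2]⟩
  have hTcard : T.card ≤ 3 * (2 * d) ^ 2 := small_sets_card (2 * d) (by omega)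
  have hScard : S.card = (2 * d).choose (d - 1) := by
    rw [hS, Finset.card_powersetCard, Finset.card_range]
  calc _ ≤ (S ×ˢ (T ×ˢ T)).card := key
    _ = S.card * (T.card * T.card) := by rw [Finset.card_product, Finset.card_product]
    _ ≤ (2 * d).choose (d - 1) * ((3 * (2 * d) ^ 2) * (3 * (2 * d) ^ 2)) := by
        rw [hScard]; exact Nat.mul_le_mul_left _ (Nat.mul_le_mul hTcard hTcard)
    _ = 144 * d ^ 4 * ((2 * d).choose (d - 1)) := by ring

lemma four_pow_le_bound (d : ℕ) (hd : 5 ≤ d) :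
    4 ^ d ≤ 2 * d * ((2 * d).choose (d - 1)) := by
  have h1 : 4 ^ d < d * Nat.centralBinom d :=
    Nat.four_pow_lt_mul_centralBinom d (by omega)
  set N := (2 * d).choose (d - 1) with hN
  have h2 : (2 * d).choose d * d = N * (d + 1) := by
    have h := Nat.choose_succ_right_eq (2 * d) (d - 1)
    have hd1 : d - 1 + 1 = d := by omega
    rw [hd1] at h
    rw [h, hN]
    congr 1
    omega
  have hC : Nat.centralBinom d = (2 * d).choose d := rfl
  have hNle : N ≤ N * d := Nat.le_mul_of_pos_right N (by omega)
  have h4 : Nat.centralBinom d * d ≤ 2 * N * d := by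
    rw [hC, h2]; nlinarith
  have h5 : Nat.centralBinom d ≤ 2 * N := Nat.le_of_mul_le_mul_right h4 (by omega)
  calc 4 ^ d ≤ d * Nat.centralBinom d := h1.le
    _ ≤ d * (2 * N) := Nat.mul_le_mul_left _ h5
    _ = 2 * d * N := by ring

lemma filter_card_le (d m : ℕ) (hd : 5 ≤ d) (hm : 2 ≤ m) (hm' : m ≤ 2 * d) :
    ((Fintype.piFinset fun _ : Fin m =>
        Finset.powersetCard (d - 1) (Finset.range (2 * d))).filter
      (fun P => ∃ j j' : Fin m, j ≠ j' ∧ d - 4 < (P j ∩ P j').card)).card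
    ≤ 576 * d ^ 6 * ((2 * d).choose (d - 1)) ^ (m - 1) := by
  classical
  set S := Finset.powersetCard (d - 1) (Finset.range (2 * d)) with hS
  set N := (2 * d).choose (d - 1) with hN
  have hScard : S.card = N := by rw [hS, Finset.card_powersetCard, Finset.card_range]
  set Ω := Fintype.piFinset fun _ : Fin m => S with hΩ
  have hpair : ∀ j j' : Fin m, j ≠ j' →
      (Ω.filter (fun P => d - 4 < (P j ∩ P j').card)).card
        ≤ N ^ (m - 2) * (144 * d ^ 4 * N) := by
    intro j j' hjj'
    set s := Ω.filter (fun P => d - 4 < (P j ∩ P j').card) with hs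
    set bad := (S ×ˢ S).filter
      (fun ab : Finset ℕ × Finset ℕ => d - 4 < (ab.1 ∩ ab.2).card) with hbad
    have hmaps : ∀ P ∈ s, (P j, P j') ∈ bad := by
      intro P hP
      rw [hs, Finset.mem_filter] at hP
      obtain ⟨hP1, hP2⟩ := hP
      rw [hΩ, Fintype.mem_piFinset] at hP1
      rw [hbad, Finset.mem_filter, Finset.mem_product]
      exact ⟨⟨hP1 j, hP1 j'⟩, hP2⟩
    have hfiber : ∀ b ∈ bad,
        (s.filter (fun P => (P j, P j') = b)).card ≤ N ^ (m - 2) := by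
      rintro ⟨A, B⟩ hb
      set g : Fin m → Finset (Finset ℕ) :=
        fun i => if i = j then {A} else if i = j' then {B} else S with hg
      have hsub : s.filter (fun P => (P j, P j') = (A, B)) ⊆ Fintype.piFinset g := by
        intro P hP
        simp only [Finset.mem_filter, Prod.mk.injEq] at hP
        obtain ⟨hPs, h1, h2⟩ := hP
        rw [hs, Finset.mem_filter] at hPs
        have hP1 := hPs.1
        rw [hΩ, Fintype.mem_piFinset] at hP1
        rw [Fintype.mem_piFinset]
        intro i
        by_cases hi : i = j
        · simp [hg, hi, h1]
        · by_cases hi' : i = j'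
          · simp [hg, hi, hi', h2, hjj'.symm]
          · simp [hg, hi, hi', hP1 i]
      refine (Finset.card_le_card hsub).trans ?_
      rw [Fintype.card_piFinset]
      have hsplit :
          (∏ i, (g i).card) =
            (∏ i ∈ Finset.univ \ ({j, j'} : Finset (Fin m)), (g i).card) *
              ∏ i ∈ ({j, j'} : Finset (Fin m)), (g i).card :=
        (Finset.prod_sdiff (Finset.subset_univ _)).symm
      have hsmall : (∏ i ∈ ({j, j'} : Finset (Fin m)), (g i).card) = 1 := by
        rw [Finset.prod_pair hjj']
        have hgj : g j = {A} := by simp [hg]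
        have hgj' : g j' = {B} := by simp [hg, hjj'.symm]
        rw [hgj, hgj']
        simp
      have hbig : (∏ i ∈ Finset.univ \ ({j, j'} : Finset (Fin m)), (g i).card)
          = N ^ (m - 2) := by
        rw [Finset.prod_congr rfl (fun i hi => ?_), Finset.prod_const]
        · congr 1
          rw [Finset.card_sdiff_of_subset (Finset.subset_univ _), Finset.card_univ,
            Fintype.card_fin, Finset.card_pair hjj']
        · simp only [Finset.mem_sdiff, Finset.mem_univ, Finset.mem_insert,
            Finset.mem_singleton, true_and] at hi
          push_neg at hi
          simp [hg, hi.1, hi.2, hScard]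
      rw [hsplit, hsmall, hbig, mul_one]
    have := Finset.card_le_mul_card_image_of_maps_to hmaps (N ^ (m - 2)) hfiber
    calc s.card ≤ N ^ (m - 2) * bad.card := this
      _ ≤ N ^ (m - 2) * (144 * d ^ 4 * N) :=
          Nat.mul_le_mul_left _ (bad_pairs_card d hd)
  have hcover : Ω.filter (fun P => ∃ j j' : Fin m, j ≠ j' ∧ d - 4 < (P j ∩ P j').card) ⊆
      (Finset.univ : Finset (Fin m × Fin m)).biUnion
        (fun q => Ω.filter (fun P => q.1 ≠ q.2 ∧ d - 4 < (P q.1 ∩ P q.2).card)) := by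
    intro P hP
    rw [Finset.mem_filter] at hP
    obtain ⟨hP1, j, j', hne, hlt⟩ := hP
    rw [Finset.mem_biUnion]
    exact ⟨(j, j'), Finset.mem_univ _, Finset.mem_filter.2 ⟨hP1, hne, hlt⟩⟩
  have hqbound : ∀ q : Fin m × Fin m,
      (Ω.filter (fun P => q.1 ≠ q.2 ∧ d - 4 < (P q.1 ∩ P q.2).card)).card
        ≤ N ^ (m - 2) * (144 * d ^ 4 * N) := by
    intro q
    by_cases hq : q.1 = q.2
    · have : Ω.filter (fun P => q.1 ≠ q.2 ∧ d - 4 < (P q.1 ∩ P q.2).card) = ∅ := by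
        apply Finset.filter_false_of_mem
        intro P _ h
        exact h.1 hq
      simp [this]
    · refine le_trans (Finset.card_le_card ?_) (hpair q.1 q.2 hq)
      intro P hP
      rw [Finset.mem_filter] at hP ⊢
      exact ⟨hP.1, hP.2.2⟩
  have hNpow : N ^ (m - 2) * N = N ^ (m - 1) := by
    rw [← pow_succ]
    congr 1
    omega
  calc _ ≤ _ := Finset.card_le_card hcover
    _ ≤ ∑ q ∈ (Finset.univ : Finset (Fin m × Fin m)),
          (Ω.filter (fun P => q.1 ≠ q.2 ∧ d - 4 < (P q.1 ∩ P q.2).card)).card :=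
        Finset.card_biUnion_le
    _ ≤ ∑ _q ∈ (Finset.univ : Finset (Fin m × Fin m)),
          N ^ (m - 2) * (144 * d ^ 4 * N) :=
        Finset.sum_le_sum (fun q _ => hqbound q)
    _ = m * m * (N ^ (m - 2) * (144 * d ^ 4 * N)) := by
        rw [Finset.sum_const, Finset.card_univ, Fintype.card_prod, Fintype.card_fin,
          smul_eq_mul]
    _ = (m * m * (144 * d ^ 4)) * (N ^ (m - 2) * N) := by ring
    _ = (m * m * (144 * d ^ 4)) * N ^ (m - 1) := by rw [hNpow]
    _ ≤ ((2 * d) * (2 * d) * (144 * d ^ 4)) * N ^ (m - 1) := by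
        apply Nat.mul_le_mul_right
        exact Nat.mul_le_mul_right _ (Nat.mul_le_mul hm' hm')
    _ = 576 * d ^ 6 * N ^ (m - 1) := by ring

/-- For each `d ≥ 5`, set `n = 2d` and let `P 1, …, P (δ d)` (with `0 < δ d ≤ n`) be
independent uniformly random `(d-1)`-element subsets of `[n]`. The probability that
some two of them intersect in more than `d - 4` elements tends to `0` as `d → ∞`. -/
theorem random_P_intersection (δ : ℕ → ℕ)
    (hδ : ∀ d : ℕ, 5 ≤ d → 0 < δ d ∧ δ d ≤ 2 * d) :
    Filter.Tendsto (fun d : ℕ =>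
      probOf (Fintype.piFinset fun _ : Fin (δ d) =>
          Finset.powersetCard (d - 1) (Finset.range (2 * d)))
        (fun P => ∃ j j' : Fin (δ d), j ≠ j' ∧ d - 4 < (P j ∩ P j').card))
      Filter.atTop (nhds 0) := by
  have htend : Filter.Tendsto (fun d : ℕ => (1152 : ℝ) * ((d : ℝ) ^ 7 / 4 ^ d))
      Filter.atTop (nhds 0) := by
    have h0 := (tendsto_pow_const_div_const_pow_of_one_lt 7
      (by norm_num : (1 : ℝ) < 4)).const_mul (1152 : ℝ)
    rw [mul_zero] at h0
    exact h0
  refine squeeze_zero' ?_ ?_ htend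
  · filter_upwards with d
    exact div_nonneg (Nat.cast_nonneg _) (Nat.cast_nonneg _)
  · filter_upwards [Filter.eventually_ge_atTop 5] with d hd5
    obtain ⟨hpos, hle⟩ := hδ d hd5
    have hbnd_nonneg : (0 : ℝ) ≤ 1152 * ((d : ℝ) ^ 7 / 4 ^ d) := by positivity
    by_cases h2δ : 2 ≤ δ d
    · set S := Finset.powersetCard (d - 1) (Finset.range (2 * d)) with hS
      set N := (2 * d).choose (d - 1) with hN
      have hN0 : 0 < N := Nat.choose_pos (by omega)
      have hScard : S.card = N := by
        rw [hS, Finset.card_powersetCard, Finset.card_range]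
      have hΩcard : (Fintype.piFinset fun _ : Fin (δ d) => S).card = N ^ δ d := by
        rw [Fintype.card_piFinset]
        simp [hScard]
      have hnat : ((Fintype.piFinset fun _ : Fin (δ d) => S).filter
            (fun P => ∃ j j' : Fin (δ d), j ≠ j' ∧ d - 4 < (P j ∩ P j').card)).card
            * 4 ^ d ≤ 1152 * d ^ 7 * N ^ δ d := by
        have h1 := filter_card_le d (δ d) hd5 h2δ hle
        have h2 := four_pow_le_bound d hd5
        have h3 := Nat.mul_le_mul h1 h2
        have hee : δ d - 1 + 1 = δ d := Nat.succ_pred_eq_of_pos hpos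
        have h4 : (576 * d ^ 6 * N ^ (δ d - 1)) * (2 * d * N)
            = 1152 * d ^ 7 * N ^ δ d := by
          rw [show (576 * d ^ 6 * N ^ (δ d - 1)) * (2 * d * N)
              = 1152 * d ^ 7 * (N ^ (δ d - 1) * N) from by ring, ← pow_succ, hee]
        exact le_trans h3 (le_of_eq h4)
      show probOf _ _ ≤ _
      simp only [probOf]
      rw [Finset.filter_congr_decidable, hΩcard, mul_div_assoc']
      rw [div_le_div_iff₀ (by exact_mod_cast Nat.pow_pos hN0) (by positivity)]
      calc _ ≤ ((1152 * d ^ 7 * N ^ δ d : ℕ) : ℝ) := by exact_mod_cast hnat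
        _ = 1152 * (d : ℝ) ^ 7 * ((N ^ δ d : ℕ) : ℝ) := by push_cast; ring
    · have h1 : δ d = 1 := by omega
      have hempty : (Fintype.piFinset fun _ : Fin (δ d) =>
            Finset.powersetCard (d - 1) (Finset.range (2 * d))).filter
          (fun P => ∃ j j' : Fin (δ d), j ≠ j' ∧ d - 4 < (P j ∩ P j').card) = ∅ := by
        apply Finset.filter_false_of_mem
        intro P _
        rintro ⟨j, j', hne, -⟩
        have hj := j.isLt
        have hj' := j'.isLt
        exact hne (Fin.ext (by omega))
      show probOf _ _ ≤ _
      simp only [probOf]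
      rw [Finset.filter_congr_decidable, hempty]
      simpa using hbnd_nonneg
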